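/- For every temperature 0 < τ ≤ 1, the binary self-training loss ℓ_τ(m) = −σ(m/τ)·log σ(m) − (1 − σ(m/τ))·log(1 − σ(m)) is strictly decreasing on [0, ∞), and attains its global maximum over ℝ at m = 0 with value ℓ_τ(0) = log 2. -/

import Mathlib

open Real

/-- The logistic sigmoid `σ t = 1 / (1 + exp (−t))`. -/
noncomputable def sigmoid (t : ℝ) : ℝ := 1 / (1 + Real.exp (-t))

/-- The binary self-training loss at margin `m` with temperature `τ`:
`ℓ_τ(m) = −σ(m/τ)·log σ(m) − (1 − σ(m/τ))·log (1 − σ(m))`. -/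
noncomputable def selfTrainLoss (τ m : ℝ) : ℝ :=
  -_root_.sigmoid (m / τ) * Real.log (_root_.sigmoid m)
    - (1 - _root_.sigmoid (m / τ)) * Real.log (1 - _root_.sigmoid m)

lemma denom_pos (t : ℝ) : 0 < 1 + Real.exp (-t) := by positivity

lemma one_sub_sigmoid (t : ℝ) :
    1 - _root_.sigmoid t = Real.exp (-t) / (1 + Real.exp (-t)) := by
  have h := (denom_pos t).ne'
  rw [_root_.sigmoid]
  field_simp [_root_.sigmoid]
  ring

lemma loss_eq (τ m : ℝ) :
    selfTrainLoss τ m = Real.log (1 + Real.exp (-m)) + m * (1 - _root_.sigmoid (m / τ)) := by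
  have hd := denom_pos m
  have hlog1 : Real.log (_root_.sigmoid m) = -Real.log (1 + Real.exp (-m)) := by
    rw [_root_.sigmoid, Real.log_div one_ne_zero hd.ne', Real.log_one]; ring
  have hlog2 : Real.log (1 - _root_.sigmoid m) = -m - Real.log (1 + Real.exp (-m)) := by
    rw [one_sub_sigmoid, Real.log_div (Real.exp_ne_zero _) hd.ne', Real.log_exp]
  rw [selfTrainLoss, hlog1, hlog2]; ring

lemma sigmoid_hasDerivAt (x : ℝ) :
    HasDerivAt _root_.sigmoid (Real.exp (-x) / (1 + Real.exp (-x)) ^ 2) x := by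
  have h1 : HasDerivAt (fun t : ℝ => 1 + Real.exp (-t)) (-Real.exp (-x)) x := by
    have := (Real.hasDerivAt_exp (-x)).comp x (hasDerivAt_neg x)
    simpa using this.const_add 1
  have h2 := h1.inv (denom_pos x).ne'
  have hs : _root_.sigmoid = fun t => (1 + Real.exp (-t))⁻¹ := by
    funext t; rw [_root_.sigmoid, one_div]
  rw [hs]
  exact h2.congr_deriv (by ring)

lemma F_hasDerivAt (τ : ℝ) (hτ : τ ≠ 0) (m : ℝ) :
    HasDerivAt (fun m => Real.log (1 + Real.exp (-m)) + m * (1 - _root_.sigmoid (m / τ)))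
      (-(Real.exp (-m) / (1 + Real.exp (-m))) + ((1 - _root_.sigmoid (m / τ))
        - m * (Real.exp (-(m / τ)) / (1 + Real.exp (-(m / τ))) ^ 2 / τ))) m := by
  have h1 : HasDerivAt (fun t : ℝ => 1 + Real.exp (-t)) (-Real.exp (-m)) m := by
    have := (Real.hasDerivAt_exp (-m)).comp m (hasDerivAt_neg m)
    simpa using this.const_add 1
  have hlog : HasDerivAt (fun t : ℝ => Real.log (1 + Real.exp (-t)))
      (-Real.exp (-m) / (1 + Real.exp (-m))) m := h1.log (denom_pos m).ne'
  have hdiv : HasDerivAt (fun t : ℝ => t / τ) (1 / τ) m := by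
    simpa using (hasDerivAt_id m).div_const τ
  have hsig : HasDerivAt (fun t : ℝ => _root_.sigmoid (t / τ))
      (Real.exp (-(m / τ)) / (1 + Real.exp (-(m / τ))) ^ 2 * (1 / τ)) m :=
    by have := (sigmoid_hasDerivAt (m / τ)).comp m hdiv; exact this
  have hprod : HasDerivAt (fun t : ℝ => t * (1 - _root_.sigmoid (t / τ)))
      (1 * (1 - _root_.sigmoid (m / τ)) + m * (0 - Real.exp (-(m / τ)) / (1 + Real.exp (-(m / τ))) ^ 2 * (1 / τ))) m :=
    (hasDerivAt_id m).mul ((hasDerivAt_const m (1:ℝ)).sub hsig)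
  have := hlog.add hprod
  exact this.congr_deriv (by ring)

lemma ratio_mono {a b : ℝ} (ha : 0 < a) (hb : 0 < b) (h : b ≤ a) :
    b / (1 + b) ≤ a / (1 + a) := by
  rw [div_le_div_iff₀ (by linarith) (by linarith)]
  nlinarith

/-- For `0 < τ ≤ 1`, the binary self-training loss is strictly decreasing on `[0, ∞)` and
attains its global maximum over `ℝ` at `m = 0`, with value `ℓ_τ(0) = log 2`. -/
theorem stmt9 (τ : ℝ) (hτ0 : 0 < τ) (hτ1 : τ ≤ 1) :
    StrictAntiOn (selfTrainLoss τ) (Set.Ici 0) ∧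
      (∀ m : ℝ, selfTrainLoss τ m ≤ selfTrainLoss τ 0) ∧
      selfTrainLoss τ 0 = Real.log 2 := by
  set F : ℝ → ℝ := fun m => Real.log (1 + Real.exp (-m)) + m * (1 - _root_.sigmoid (m / τ)) with hF
  have hFeq : selfTrainLoss τ = F := funext fun m => loss_eq τ m
  -- derivative negative on (0, ∞)
  have hderivneg : ∀ m ∈ interior (Set.Ici (0:ℝ)), deriv F m < 0 := by
    intro m hm
    rw [interior_Ici] at hm
    have hm0 : 0 < m := hm
    rw [(F_hasDerivAt τ hτ0.ne' m).deriv]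
    have hmτ : m ≤ m / τ := by
      rw [le_div_iff₀ hτ0]; nlinarith
    have hexp : Real.exp (-(m / τ)) ≤ Real.exp (-m) := Real.exp_le_exp.2 (by linarith)
    have h1 : 1 - _root_.sigmoid (m / τ) ≤ Real.exp (-m) / (1 + Real.exp (-m)) := by
      rw [one_sub_sigmoid]
      exact ratio_mono (Real.exp_pos _) (Real.exp_pos _) hexp
    have h2 : 0 < m * (Real.exp (-(m / τ)) / (1 + Real.exp (-(m / τ))) ^ 2 / τ) := by
      have := denom_pos (m / τ)
      positivity
    linarith
  have hcont : ContinuousOn F (Set.Ici 0) := fun x _ =>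
    ((F_hasDerivAt τ hτ0.ne' x).continuousAt).continuousWithinAt
  have hanti : StrictAntiOn F (Set.Ici 0) :=
    strictAntiOn_of_deriv_neg (convex_Ici 0) hcont hderivneg
  have heven : ∀ m : ℝ, F (-m) = F m := by
    intro m
    have h1 : 1 - _root_.sigmoid (-(m / τ)) = _root_.sigmoid (m / τ) := by
      have h2 : (0:ℝ) < 1 + Real.exp (m / τ) := by positivity
      have h3 := denom_pos (m / τ)
      have h4 := (Real.exp_pos (m / τ)).ne'
      rw [one_sub_sigmoid, _root_.sigmoid, neg_neg]
      field_simp [Real.exp_neg]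
      rw [mul_add, mul_one, ← Real.exp_add, add_neg_cancel, Real.exp_zero]; ring
    have hlog : Real.log (1 + Real.exp m) = m + Real.log (1 + Real.exp (-m)) := by
      have : 1 + Real.exp m = Real.exp m * (1 + Real.exp (-m)) := by
        rw [mul_add, mul_one, ← Real.exp_add, add_neg_cancel, Real.exp_zero]; ring
      rw [this, Real.log_mul (Real.exp_ne_zero _) (denom_pos m).ne', Real.log_exp]
    have hσ : _root_.sigmoid (m / τ) + (1 - _root_.sigmoid (m / τ)) = 1 := by ring
    simp only [hF, neg_neg, neg_div, h1, hlog]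
    ring
  have hval : F 0 = Real.log 2 := by
    simp [hF]
    norm_num
  refine ⟨hFeq ▸ hanti, ?_, hFeq ▸ hval⟩
  intro m
  rw [hFeq]
  rcases le_or_gt 0 m with h | h
  · rcases eq_or_lt_of_le h with rfl | h'
    · exact le_rfl
    · exact (hanti (Set.mem_Ici.2 le_rfl) (Set.mem_Ici.2 h) h').le
  · rw [← heven m]
    have : 0 < -m := by linarith
    exact (hanti (Set.mem_Ici.2 le_rfl) (Set.mem_Ici.2 this.le) this).le
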